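/- arXiv:2208.14787 — 2 statements merged into one kernel-verified Lean document; each statement's English description precedes it below -/
import Mathlib

section
/- Let R be an RC-closed collection of strings over the DNA alphabet and let X be a nonempty string over the DNA alphabet. Then the multiset of complemented left-context symbols { π(a) : a is the left-context symbol of an occurrence of X in a string of R } equals the multiset of right-context symbols { b : b is the right-context symbol of an occurrence of the reverse complement X̂ in a string of R }. -/
/-- The DNA alphabet Σ = {A, C, G, T}. -/
inductive Base : Type
  | A | C | G | T
  deriving DecidableEq, Repr

instance instFintypeBase : Fintype Base :=
  ⟨{Base.A, Base.C, Base.G, Base.T}, fun x => by cases x <;> simp⟩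

/-- The DNA complement permutation π: A ↔ T, C ↔ G. -/
def comp : Base → Base
  | .A => .T
  | .T => .A
  | .C => .G
  | .G => .C

/-- The reverse complement Ŵ of a DNA string W. -/
def revComp (W : List Base) : List Base := W.reverse.map comp

/-- `W` occurs in `T` at (0-indexed) position `i`, i.e. `T[i..i+|W|-1] = W`. -/
def occursAt (W T : List Base) (i : ℕ) : Prop :=
  i + W.length ≤ T.length ∧ (T.drop i).take W.length = W

instance (W T : List Base) : DecidablePred (occursAt W T) := fun i =>
  inferInstanceAs (Decidable (_ ∧ _))

/-- The number of occurrences of `W` in `T`. -/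
noncomputable def occCount (W T : List Base) : ℕ := {i | occursAt W T i}.ncard

/-- The alphabet with the sentinel `$`: the sentinel is `⊥`, the DNA symbols are
coerced. The complement permutation is extended by `π($) = $`
(i.e. `WithBot.map comp ⊥ = ⊥`). -/
abbrev SymB := WithBot Base

/-- Left-context symbol of an occurrence of a string at (0-indexed) position `i`
in `T`: the symbol `T[i-1]` if `i > 0`, and the sentinel `$` otherwise. -/
def leftCtx (T : List Base) (i : ℕ) : SymB :=
  if i = 0 then ⊥ else (T[i-1]?).elim ⊥ (fun a => (a : SymB))

/-- Right-context symbol of an occurrence of a string of length `m` at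
(0-indexed) position `i` in `T`: the symbol `T[i+m]` if the occurrence does not
end at the last position of `T`, and the sentinel `$` otherwise. -/
def rightCtx (T : List Base) (m i : ℕ) : SymB :=
  (T[i+m]?).elim ⊥ (fun a => (a : SymB))

/-- A collection (multiset) of strings is RC-closed if every string has the same
multiplicity as its reverse complement. -/
def RCClosed (R : Multiset (List Base)) : Prop :=
  ∀ T : List Base, R.count T = R.count (revComp T)

/-- The multiset of left-context symbols of all occurrences of `X` among the
strings of `R` (with multiplicity). -/
def leftCtxs (R : Multiset (List Base)) (X : List Base) : Multiset SymB :=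
  R.bind (fun T =>
    ((Multiset.range (T.length + 1)).filter (occursAt X T)).map (fun i => leftCtx T i))

/-- The multiset of right-context symbols of all occurrences of `X` among the
strings of `R` (with multiplicity). -/
def rightCtxs (R : Multiset (List Base)) (X : List Base) : Multiset SymB :=
  R.bind (fun T =>
    ((Multiset.range (T.length + 1)).filter (occursAt X T)).map
      (fun i => rightCtx T X.length i))

lemma comp_comp (b : Base) : comp (comp b) = b := by cases b <;> rfl

lemma revComp_length (W : List Base) : (revComp W).length = W.length := by
  simp [revComp]

lemma revComp_revComp (W : List Base) : revComp (revComp W) = W := by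
  simp [revComp, List.map_reverse, List.map_map, Function.comp_def, comp_comp]

lemma revComp_append (a b : List Base) :
    revComp (a ++ b) = revComp b ++ revComp a := by
  simp [revComp]

lemma occursAt_iff (W T : List Base) (i : ℕ) :
    occursAt W T i ↔ ∃ u v, T = u ++ W ++ v ∧ u.length = i := by
  constructor
  · rintro ⟨h1, h2⟩
    refine ⟨T.take i, T.drop (i + W.length), ?_, by rw [List.length_take]; omega⟩
    have e1 : T.drop i = W ++ T.drop (i + W.length) := by
      conv_lhs => rw [← List.take_append_drop W.length (T.drop i)]
      rw [h2]
      congr 1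
      rw [List.drop_drop]
    rw [List.append_assoc, ← e1, List.take_append_drop]
  · rintro ⟨u, v, rfl, rfl⟩
    constructor
    · simp only [List.length_append]; omega
    · rw [List.append_assoc, List.drop_left, List.take_left]

lemma occ_rev {X T : List Base} {i : ℕ} (h : occursAt X T i) :
    occursAt (revComp X) (revComp T) (T.length - X.length - i) := by
  rw [occursAt_iff] at h ⊢
  obtain ⟨u, v, rfl, rfl⟩ := h
  refine ⟨revComp v, revComp u, ?_, ?_⟩
  · rw [revComp_append, revComp_append, List.append_assoc]
  · simp [revComp_length, List.length_append]; omega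

lemma ctx_eq {X T : List Base} (hX : X ≠ []) {i : ℕ} (h : occursAt X T i) :
    WithBot.map comp (leftCtx T i) =
      rightCtx (revComp T) X.length (T.length - X.length - i) := by
  have hm : 0 < X.length := List.length_pos_iff.mpr hX
  have hlen : i + X.length ≤ T.length := h.1
  rcases Nat.eq_zero_or_pos i with hi | hi
  · subst hi
    have : T.length - X.length - 0 + X.length = T.length := by omega
    rw [leftCtx, if_pos rfl, rightCtx, this]
    rw [List.getElem?_eq_none (by rw [revComp_length])]
    rfl
  · have h1 : i - 1 < T.length := by omega
    have h2 : T.length - X.length - i + X.length = T.length - i := by omega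
    have h3 : T.length - i < (revComp T).length := by rw [revComp_length]; omega
    rw [leftCtx, if_neg (by omega), rightCtx, h2]
    rw [List.getElem?_eq_getElem h1, List.getElem?_eq_getElem h3]
    have : (revComp T)[T.length - i] = comp T[i-1] := by
      simp only [revComp]
      rw [List.getElem_map, List.getElem_reverse]
      congr 2
      omega
    rw [this]
    rfl

lemma perT (X : List Base) (hX : X ≠ []) (T : List Base) :
    ((Multiset.range (T.length + 1)).filter (occursAt X T)).map
        (fun i => WithBot.map comp (leftCtx T i)) =
      ((Multiset.range ((revComp T).length + 1)).filter
          (occursAt (revComp X) (revComp T))).map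
        (fun i => rightCtx (revComp T) (revComp X).length i) := by
  have hT : (revComp T).length = T.length := revComp_length T
  have hXl : (revComp X).length = X.length := revComp_length X
  set n := T.length with hn
  set m := X.length with hm
  have key : (Multiset.range (n+1)).filter (occursAt (revComp X) (revComp T)) =
      ((Multiset.range (n+1)).filter (occursAt X T)).map (fun i => n - m - i) := by
    have nd1 : ((Multiset.range (n+1)).filter (occursAt (revComp X) (revComp T))).Nodup :=
      (Multiset.nodup_range _).filter _
    have nd2 : (((Multiset.range (n+1)).filter (occursAt X T)).map (fun i => n - m - i)).Nodup := by
      refine Multiset.Nodup.map_on ?_ ((Multiset.nodup_range _).filter _)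
      intro x hx y hy hxy
      rw [Multiset.mem_filter] at hx hy
      have hx2 := hx.2.1
      have hy2 := hy.2.1
      omega
    rw [Multiset.Nodup.ext nd1 nd2]
    intro j
    simp only [Multiset.mem_filter, Multiset.mem_map, Multiset.mem_range]
    constructor
    · rintro ⟨hj, hocc⟩
      have hle : j + m ≤ n := by
        have := hocc.1; rw [hT, hXl] at this; exact this
      refine ⟨n - m - j, ⟨by omega, ?_⟩, by omega⟩
      have := occ_rev hocc
      rwa [revComp_revComp, revComp_revComp, hT, hXl] at this
    · rintro ⟨i, ⟨hi, hocc⟩, rfl⟩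
      have hle : i + m ≤ n := hocc.1
      have := occ_rev hocc
      rw [hT, hXl] at *
      exact ⟨by omega, this⟩
  rw [hT, hXl, key, Multiset.map_map]
  refine Multiset.map_congr rfl ?_
  intro i hi
  rw [Multiset.mem_filter] at hi
  exact ctx_eq hX hi.2

/-- in an RC-closed collection `R`, for a nonempty DNA string `X`,
the multiset of complemented left-context symbols of the occurrences of `X`
equals the multiset of right-context symbols of the occurrences of `X̂`. -/
theorem stmt_3 (R : Multiset (List Base)) (hR : RCClosed R)
    (X : List Base) (hX : X ≠ []) :
    (leftCtxs R X).map (WithBot.map comp) = rightCtxs R (revComp X) := by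
  have hinj : Function.Injective revComp :=
    Function.LeftInverse.injective revComp_revComp
  have hmapR : R.map revComp = R := by
    ext T
    conv_lhs => rw [show T = revComp (revComp T) from (revComp_revComp T).symm,
      Multiset.count_map_eq_count' revComp R hinj]
    exact (hR T).symm
  unfold leftCtxs rightCtxs
  rw [Multiset.map_bind]
  simp only [Multiset.map_map]
  conv_rhs => rw [← hmapR, Multiset.bind_map]
  exact Multiset.bind_congr (fun T _ => perT X hX T)
end

section
/- Let R be a collection of strings over the DNA alphabet and let X be a nonempty string that is both left-maximal and right-maximal in R. Then there exist two occurrences of X in strings of R, say T_x[a..b] = X = T_y[a'..b'] with (T_x, a) ≠ (T_y, a'), that form a MEM of length |X|: their left-context symbols differ and their right-context symbols differ, hence the match cannot be extended on either side. -/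
/-- `W` is left-maximal in `R` if its occurrences among the strings of `R` have
at least two distinct left-context symbols. -/
def LeftMaximal (R : Multiset (List Base)) (W : List Base) : Prop :=
  ∃ T₁ ∈ R, ∃ T₂ ∈ R, ∃ i₁ i₂ : ℕ,
    occursAt W T₁ i₁ ∧ occursAt W T₂ i₂ ∧ leftCtx T₁ i₁ ≠ leftCtx T₂ i₂

/-- `W` is right-maximal in `R` if its occurrences among the strings of `R` have
at least two distinct right-context symbols. -/
def RightMaximal (R : Multiset (List Base)) (W : List Base) : Prop :=
  ∃ T₁ ∈ R, ∃ T₂ ∈ R, ∃ i₁ i₂ : ℕ,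
    occursAt W T₁ i₁ ∧ occursAt W T₂ i₂ ∧
      rightCtx T₁ W.length i₁ ≠ rightCtx T₂ W.length i₂

/-- A pair of occurrences of a common string of length `m`, at position `a` in
`Tx` and position `a'` in `Ty` (0-indexed), is a MEM if it cannot be extended:
(`a = 0` or `a' = 0` or `Tx[a-1] ≠ Ty[a'-1]`) and (the occurrence ends at the
last position of `Tx` or of `Ty`, or `Tx[a+m] ≠ Ty[a'+m]`). -/
def IsMEM (Tx : List Base) (a : ℕ) (Ty : List Base) (a' : ℕ) (m : ℕ) : Prop :=
  (a = 0 ∨ a' = 0 ∨ Tx[a-1]? ≠ Ty[a'-1]?) ∧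
  (a + m = Tx.length ∨ a' + m = Ty.length ∨ Tx[a+m]? ≠ Ty[a'+m]?)


lemma key_mem (R : Multiset (List Base)) (X : List Base) {Tx Ty : List Base} {a a' : ℕ}
    (hx : Tx ∈ R) (hy : Ty ∈ R) (ox : occursAt X Tx a) (oy : occursAt X Ty a')
    (hl : leftCtx Tx a ≠ leftCtx Ty a')
    (hr : rightCtx Tx X.length a ≠ rightCtx Ty X.length a') :
    ∃ Tx ∈ R, ∃ Ty ∈ R, ∃ a a' : ℕ,
      occursAt X Tx a ∧ occursAt X Ty a' ∧ (Tx, a) ≠ (Ty, a') ∧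
      leftCtx Tx a ≠ leftCtx Ty a' ∧
      rightCtx Tx X.length a ≠ rightCtx Ty X.length a' ∧
      IsMEM Tx a Ty a' X.length := by
  refine ⟨Tx, hx, Ty, hy, a, a', ox, oy, ?_, hl, hr, ?_, ?_⟩
  · intro h
    rw [Prod.mk.injEq] at h
    exact hl (by rw [h.1, h.2])
  · by_contra h
    push_neg at h
    obtain ⟨h1, h2, h3⟩ := h
    exact hl (by simp [leftCtx, h1, h2, h3])
  · by_contra h
    push_neg at h
    obtain ⟨_, _, h3⟩ := h
    exact hr (by simp [rightCtx, h3])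

/-- if a nonempty string `X` is both left-maximal and
right-maximal in the collection `R`, then there are two occurrences of `X` in
strings of `R` whose left-context symbols differ and whose right-context
symbols differ; hence they form a MEM of length `|X|`. -/
theorem stmt_10 (R : Multiset (List Base)) (X : List Base) (hX : X ≠ [])
    (hL : LeftMaximal R X) (hRt : RightMaximal R X) :
    ∃ Tx ∈ R, ∃ Ty ∈ R, ∃ a a' : ℕ,
      occursAt X Tx a ∧ occursAt X Ty a' ∧ (Tx, a) ≠ (Ty, a') ∧
      leftCtx Tx a ≠ leftCtx Ty a' ∧
      rightCtx Tx X.length a ≠ rightCtx Ty X.length a' ∧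
      IsMEM Tx a Ty a' X.length := by
  obtain ⟨T₁, h1, T₂, h2, i₁, i₂, o1, o2, hl12⟩ := hL
  obtain ⟨T₃, h3, T₄, h4, i₃, i₄, o3, o4, hr34⟩ := hRt
  by_cases hr12 : rightCtx T₁ X.length i₁ = rightCtx T₂ X.length i₂
  · by_cases hr31 : rightCtx T₃ X.length i₃ = rightCtx T₁ X.length i₁
    · -- then rightCtx T₄ differs from both T₁ and T₂
      have hr41 : rightCtx T₄ X.length i₄ ≠ rightCtx T₁ X.length i₁ := by
        intro h; exact hr34 (hr31.trans h.symm)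
      by_cases hl41 : leftCtx T₄ i₄ = leftCtx T₁ i₁
      · have hl42 : leftCtx T₄ i₄ ≠ leftCtx T₂ i₂ := by rw [hl41]; exact hl12
        have hr42 : rightCtx T₄ X.length i₄ ≠ rightCtx T₂ X.length i₂ := by
          rw [← hr12]; exact hr41
        exact key_mem R X h4 h2 o4 o2 hl42 hr42
      · exact key_mem R X h4 h1 o4 o1 hl41 hr41
    · by_cases hl31 : leftCtx T₃ i₃ = leftCtx T₁ i₁
      · have hl32 : leftCtx T₃ i₃ ≠ leftCtx T₂ i₂ := by rw [hl31]; exact hl12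
        have hr32 : rightCtx T₃ X.length i₃ ≠ rightCtx T₂ X.length i₂ := by
          rw [← hr12]; exact hr31
        exact key_mem R X h3 h2 o3 o2 hl32 hr32
      · exact key_mem R X h3 h1 o3 o1 hl31 hr31
  · exact key_mem R X h1 h2 o1 o2 hl12 hr12
end
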